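/- Let S be a set of four pairwise disjoint (trivially intersecting) 2-dimensional subspaces S_1,...,S_4 of E = F_2^4. Then the orthogonal complements S_1^⊥,...,S_4^⊥ are pairwise trivially intersecting 2-dimensional subspaces, and the 3 nonzero vectors of E not covered by them form, together with 0, a 2-dimensional subspace S_5^⊥; in particular S_1^⊥,...,S_5^⊥ form a 2-spread of F_2^4. -/

import Mathlib

open Matrix

variable {F : Type*} [Field F]

/-- Column space of a matrix: the span of its columns. -/
def colSpace {n m : ℕ} (M : Matrix (Fin n) (Fin m) F) : Submodule F (Fin n → F) :=
  Submodule.span F (Set.range Mᵀ)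

lemma colSpace_le_iff {n m : ℕ} (M : Matrix (Fin n) (Fin m) F) (U : Submodule F (Fin n → F)) :
    colSpace M ≤ U ↔ ∀ j, Mᵀ j ∈ U := by
  rw [colSpace, Submodule.span_le]
  exact ⟨fun h j => h ⟨j, rfl⟩, fun h _ ⟨j, hj⟩ => hj ▸ h j⟩

/-- `C(U)`: the codewords of `C` whose column space is contained in `U`. -/
def codeCU {n m : ℕ} (C : Submodule F (Matrix (Fin n) (Fin m) F))
    (U : Submodule F (Fin n → F)) : Submodule F (Matrix (Fin n) (Fin m) F) where
  carrier := {M | M ∈ C ∧ colSpace M ≤ U}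
  add_mem' := by
    rintro a b ⟨haC, ha⟩ ⟨hbC, hb⟩
    refine ⟨C.add_mem haC hbC, (colSpace_le_iff _ _).2 fun j => ?_⟩
    have h := U.add_mem ((colSpace_le_iff a U).1 ha j) ((colSpace_le_iff b U).1 hb j)
    rw [Matrix.transpose_add]; exact h
  zero_mem' := by
    exact ⟨C.zero_mem, (colSpace_le_iff _ _).2 fun j => U.zero_mem⟩
  smul_mem' := by
    rintro c a ⟨haC, ha⟩
    refine ⟨C.smul_mem c haC, (colSpace_le_iff _ _).2 fun j => ?_⟩
    have h := U.smul_mem c ((colSpace_le_iff a U).1 ha j)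
    rw [Matrix.transpose_smul]; exact h

/-- Orthogonal complement with respect to the standard (dot-product) bilinear form. -/
def perp {n : ℕ} (U : Submodule F (Fin n → F)) : Submodule F (Fin n → F) where
  carrier := {v | ∀ u ∈ U, v ⬝ᵥ u = 0}
  add_mem' := by
    intro a b ha hb u hu
    rw [add_dotProduct, ha u hu, hb u hu, add_zero]
  zero_mem' := by
    intro u hu
    rw [zero_dotProduct]
  smul_mem' := by
    intro c a ha u hu
    rw [smul_dotProduct, ha u hu, smul_zero]

/-- The minimum rank distance of a matrix code. -/
noncomputable def minRankDist {n m : ℕ} (C : Submodule F (Matrix (Fin n) (Fin m) F)) : ℕ :=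
  sInf {r : ℕ | ∃ M ∈ C, M ≠ 0 ∧ M.rank = r}

/-- The rank function of the q-polymatroid associated to a matrix rank-metric code. -/
noncomputable def rhoCode {n m : ℕ} (C : Submodule F (Matrix (Fin n) (Fin m) F))
    (U : Submodule F (Fin n → F)) : ℚ :=
  ((Module.finrank F C : ℚ) - (Module.finrank F (codeCU C (perp U)) : ℚ)) / (m : ℚ)

section Aux
open Module

local notation "E4" => (Fin 4 → ZMod 2)

private noncomputable def dotB : LinearMap.BilinForm (ZMod 2) E4 := Matrix.toBilin' 1

private lemma dotB_apply (v w : E4) : dotB v w = v ⬝ᵥ w := by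
  simp [dotB, Matrix.toBilin'_apply']

private lemma dotB_nondeg : dotB.Nondegenerate := by
  refine ⟨?_, ?_⟩
  all_goals
    intro m h
    funext j
    have := h (Pi.single j 1)
    rw [dotB_apply] at this
    simpa using this

private lemma dotB_refl : dotB.IsRefl := by
  intro x y h
  rw [dotB_apply] at h ⊢
  rwa [dotProduct_comm]

private lemma perp_eq_orthogonal (U : Submodule (ZMod 2) E4) :
    perp U = dotB.orthogonal U := by
  ext v
  constructor
  · intro hv u hu
    rw [dotB_apply, dotProduct_comm]
    exact hv u hu
  · intro hv u hu
    have := hv u hu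
    rw [dotB_apply, dotProduct_comm] at this
    exact this

private lemma finrank_perp (U : Submodule (ZMod 2) E4) :
    finrank (ZMod 2) (perp U) = 4 - finrank (ZMod 2) U := by
  rw [perp_eq_orthogonal, LinearMap.BilinForm.finrank_orthogonal dotB_nondeg]
  simp

end Aux

private lemma zmod2_cases : ∀ c : ZMod 2, c = 0 ∨ c = 1 := by decide

private lemma zmod2_self_add : ∀ c : ZMod 2, c + c = 0 := by decide

private lemma two_tor (x : Fin 4 → ZMod 2) : x + x = 0 :=
  funext fun i => zmod2_self_add (x i)

private lemma add_eq_zero_iff_eq (x y : Fin 4 → ZMod 2) : x + y = 0 ↔ x = y := by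
  constructor
  · intro h
    have := congrArg (· + y) h
    simpa [add_assoc, two_tor] using this
  · rintro rfl; exact two_tor x

/-- Structure of a 2-dimensional subspace of `F_2^4`. -/
private lemma plane_struct (W : Submodule (ZMod 2) (Fin 4 → ZMod 2))
    (h : Module.finrank (ZMod 2) W = 2) :
    ∃ a b : Fin 4 → ZMod 2, a ≠ 0 ∧ b ≠ 0 ∧ a ≠ b ∧
      (∀ v, v ∈ W ↔ v = 0 ∨ v = a ∨ v = b ∨ v = a + b) := by
  have : FiniteDimensional (ZMod 2) W := FiniteDimensional.of_finrank_pos (by omega)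
  let B := Module.finBasisOfFinrankEq (ZMod 2) W h
  refine ⟨(B 0 : _), (B 1 : _), ?_, ?_, ?_, ?_⟩
  · simpa [Submodule.coe_eq_zero] using B.ne_zero 0
  · simpa [Submodule.coe_eq_zero] using B.ne_zero 1
  · intro hab
    exact absurd (B.injective (Subtype.coe_injective hab)) (by decide)
  · intro v
    constructor
    · intro hv
      have hrep := B.sum_repr ⟨v, hv⟩
      rw [Fin.sum_univ_two] at hrep
      have hv' : v = (B.repr ⟨v, hv⟩ 0) • (B 0 : Fin 4 → ZMod 2)
          + (B.repr ⟨v, hv⟩ 1) • (B 1 : Fin 4 → ZMod 2) := by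
        have := congrArg (Subtype.val) hrep
        simpa using this.symm
      rcases zmod2_cases (B.repr ⟨v, hv⟩ 0) with h0 | h0 <;>
        rcases zmod2_cases (B.repr ⟨v, hv⟩ 1) with h1 | h1 <;>
        rw [h0, h1] at hv' <;> simp only [zero_smul, one_smul, add_zero, zero_add] at hv' <;>
        tauto
    · rintro (rfl | rfl | rfl | rfl)
      · exact W.zero_mem
      · exact (B 0).2
      · exact (B 1).2
      · exact W.add_mem (B 0).2 (B 1).2

/-- four pairwise trivially intersecting 2-spaces of `F_2^4` have pairwise
trivially intersecting 2-dimensional orthogonal complements, and the uncovered nonzero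
vectors together with `0` form a fifth 2-space, completing a 2-spread of `F_2^4`. -/
theorem four_disjoint_planes_spread
    (S : Fin 4 → Submodule (ZMod 2) (Fin 4 → ZMod 2))
    (hdim : ∀ i, Module.finrank (ZMod 2) (S i) = 2)
    (hdisj : ∀ i j, i ≠ j → S i ⊓ S j = ⊥) :
    (∀ i, Module.finrank (ZMod 2) (perp (S i)) = 2) ∧
    (∀ i j, i ≠ j → perp (S i) ⊓ perp (S j) = ⊥) ∧
    ∃ T : Submodule (ZMod 2) (Fin 4 → ZMod 2),
      Module.finrank (ZMod 2) T = 2 ∧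
      (∀ v : Fin 4 → ZMod 2, v ∈ T ↔ (v = 0 ∨ ∀ i, v ∉ perp (S i))) ∧
      (∀ v : Fin 4 → ZMod 2, v ≠ 0 → (∃ i, v ∈ perp (S i)) ∨ v ∈ T) ∧
      (∀ i, perp (S i) ⊓ T = ⊥) := by
  
  classical
  have hfr : ∀ i, Module.finrank (ZMod 2) (perp (S i)) = 2 := by
    intro i; rw [finrank_perp, hdim]
  have hperpdisj : ∀ i j, i ≠ j → perp (S i) ⊓ perp (S j) = ⊥ := by
    intro i j hij
    have hsup : S i ⊔ S j = ⊤ := by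
      apply Submodule.eq_top_of_finrank_eq
      have h1 := Submodule.finrank_sup_add_finrank_inf_eq (S i) (S j)
      rw [hdisj i j hij] at h1
      simp only [finrank_bot, add_zero, hdim] at h1
      rw [h1]; simp
    ext v
    simp only [Submodule.mem_inf, Submodule.mem_bot]
    constructor
    · rintro ⟨h1, h2⟩
      funext k
      have hk : Pi.single k 1 ∈ S i ⊔ S j := by rw [hsup]; trivial
      obtain ⟨x, hx, y, hy, hxy⟩ := Submodule.mem_sup.1 hk
      have : v ⬝ᵥ Pi.single k (1 : ZMod 2) = 0 := by
        rw [← hxy, dotProduct_add, h1 x hx, h2 y hy, add_zero]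
      simpa using this
    · rintro rfl; exact ⟨(perp _).zero_mem, (perp _).zero_mem⟩
  refine ⟨hfr, hperpdisj, ?_⟩
  have hstruct := fun i => plane_struct (perp (S i)) (hfr i)
  choose a b ha hb hab hmem using hstruct
  have habne : ∀ i, a i + b i ≠ 0 := fun i h => hab i ((add_eq_zero_iff_eq _ _).1 h)
  have haba : ∀ i, a i ≠ a i + b i := by
    intro i h
    apply hb i
    have h2 := congrArg (fun z => a i + z) h
    simpa [← add_assoc, two_tor] using h2.symm
  have habb : ∀ i, b i ≠ a i + b i := by
    intro i h
    apply ha i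
    have h2 := congrArg (fun z => z + b i) h
    simpa [add_assoc, two_tor] using h2.symm
  set Cfin : Fin 4 → Finset (Fin 4 → ZMod 2) := fun i => {a i, b i, a i + b i} with hCfin
  have hmemC : ∀ i v, v ∈ Cfin i ↔ (v ∈ perp (S i) ∧ v ≠ 0) := by
    intro i v
    simp only [hCfin, Finset.mem_insert, Finset.mem_singleton]
    rw [hmem i v]
    constructor
    · rintro (rfl | rfl | rfl)
      · exact ⟨Or.inr (Or.inl rfl), ha i⟩
      · exact ⟨Or.inr (Or.inr (Or.inl rfl)), hb i⟩
      · exact ⟨Or.inr (Or.inr (Or.inr rfl)), habne i⟩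
    · rintro ⟨(rfl | h) , hv0⟩
      · exact absurd rfl hv0
      · exact h
  have hcard : ∀ i, (Cfin i).card = 3 := by
    intro i
    rw [Finset.card_eq_three]
    exact ⟨a i, b i, a i + b i, hab i, haba i, habb i, rfl⟩
  have hCdisj : ∀ i j, i ≠ j → Disjoint (Cfin i) (Cfin j) := by
    intro i j hij
    rw [Finset.disjoint_left]
    intro v hvi hvj
    have h1 := (hmemC i v).1 hvi
    have h2 := (hmemC j v).1 hvj
    have : v ∈ perp (S i) ⊓ perp (S j) := ⟨h1.1, h2.1⟩
    rw [hperpdisj i j hij] at this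
    exact h1.2 this
  set Cov : Finset (Fin 4 → ZMod 2) := Finset.univ.biUnion Cfin with hCov
  have hCovdisj : (↑(Finset.univ : Finset (Fin 4)) : Set (Fin 4)).PairwiseDisjoint Cfin :=
    fun i _ j _ hij => hCdisj i j hij
  have hCovcard : Cov.card = 12 := by
    rw [hCov, Finset.card_biUnion hCovdisj]
    simp [hcard]
  have h0Cov : (0 : Fin 4 → ZMod 2) ∉ Cov := by
    rw [hCov]
    simp only [Finset.mem_biUnion]
    rintro ⟨i, -, h⟩
    exact ((hmemC i 0).1 h).2 rfl
  set A : Finset (Fin 4 → ZMod 2) := Finset.univ \ insert 0 Cov with hA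
  have hmemA : ∀ v, v ∈ A ↔ (v ≠ 0 ∧ ∀ i, v ∉ perp (S i)) := by
    intro v
    rw [hA, Finset.mem_sdiff, Finset.mem_insert]
    constructor
    · rintro ⟨-, hv⟩
      push_neg at hv
      obtain ⟨hv0, hvC⟩ := hv
      refine ⟨hv0, fun i hvi => ?_⟩
      rw [hCov, Finset.mem_biUnion] at hvC
      exact hvC ⟨i, Finset.mem_univ i, (hmemC i v).2 ⟨hvi, hv0⟩⟩
    · rintro ⟨hv0, hv⟩
      refine ⟨Finset.mem_univ v, ?_⟩
      rintro (rfl | hvC)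
      · exact hv0 rfl
      · rw [hCov, Finset.mem_biUnion] at hvC
        obtain ⟨i, -, hvi⟩ := hvC
        exact hv i ((hmemC i v).1 hvi).1
  have hucard : (Finset.univ : Finset (Fin 4 → ZMod 2)).card = 16 := by
    simp [Finset.card_univ]
  have hAcard : A.card = 3 := by
    rw [hA, Finset.card_sdiff_of_subset (Finset.subset_univ _),
      Finset.card_insert_of_notMem h0Cov, hCovcard, hucard]
  have hsumU : (∑ v : Fin 4 → ZMod 2, v) = 0 := by decide
  have hsumC : ∀ i, ∑ v ∈ Cfin i, v = 0 := by
    intro i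
    rw [hCfin]
    rw [Finset.sum_insert (by simp [hab i, haba i]),
      Finset.sum_insert (by simp [habb i]), Finset.sum_singleton]
    have h2 : a i + (b i + (a i + b i)) = (a i + a i) + (b i + b i) := by abel
    rw [h2, two_tor, two_tor, add_zero]
  have hsumA : ∑ v ∈ A, v = 0 := by
    have h1 : ∑ v ∈ insert (0 : Fin 4 → ZMod 2) Cov, v = 0 := by
      rw [Finset.sum_insert h0Cov, hCov, Finset.sum_biUnion hCovdisj]
      simp [hsumC]
    have h2 := Finset.sum_sdiff (f := fun v : Fin 4 → ZMod 2 => v)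
      (Finset.subset_univ (insert 0 Cov))
    rw [h1, add_zero, hsumU] at h2
    rw [hA]; exact h2
  obtain ⟨v1, v2, v3, h12, h13, h23, hAeq⟩ := Finset.card_eq_three.1 hAcard
  have hv1A : v1 ∈ A := by rw [hAeq]; simp
  have hv2A : v2 ∈ A := by rw [hAeq]; simp
  have hv3A : v3 ∈ A := by rw [hAeq]; simp
  have hv1 := (hmemA v1).1 hv1A
  have hv2 := (hmemA v2).1 hv2A
  have hsum3 : v1 + v2 + v3 = 0 := by
    rw [hAeq] at hsumA
    rw [Finset.sum_insert (by simp [h12, h13]), Finset.sum_insert (by simp [h23]),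
      Finset.sum_singleton] at hsumA
    rwa [add_assoc]
  have hv3 : v3 = v1 + v2 := ((add_eq_zero_iff_eq _ _).1 hsum3).symm
  have hli : LinearIndependent (ZMod 2) ![v1, v2] := by
    rw [LinearIndependent.pair_iff]
    intro s t hst
    rcases zmod2_cases s with rfl | rfl <;> rcases zmod2_cases t with rfl | rfl
    · exact ⟨rfl, rfl⟩
    · exact absurd (by simpa using hst) hv2.1
    · exact absurd (by simpa using hst) hv1.1
    · exact absurd ((add_eq_zero_iff_eq _ _).1 (by simpa using hst)) h12
  refine ⟨Submodule.span (ZMod 2) {v1, v2}, ?_, ?_, ?_, ?_⟩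
  · have h := finrank_span_eq_card hli
    rwa [Matrix.range_cons_cons_empty, Fintype.card_fin] at h
  · intro v
    rw [Submodule.mem_span_pair]
    have hv3p := (hmemA v3).1 hv3A
    constructor
    · rintro ⟨c, d, rfl⟩
      rcases zmod2_cases c with rfl | rfl <;> rcases zmod2_cases d with rfl | rfl <;>
        simp only [zero_smul, one_smul, add_zero, zero_add]
      · exact Or.inl trivial
      · exact Or.inr hv2.2
      · exact Or.inr hv1.2
      · exact Or.inr (hv3 ▸ hv3p.2)
    · rintro (rfl | hv)
      · exact ⟨0, 0, by simp⟩
      · have hvne : v ≠ 0 := fun h0 => hv 0 (h0 ▸ (perp (S 0)).zero_mem)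
        have hvA : v ∈ A := (hmemA v).2 ⟨hvne, hv⟩
        rw [hAeq] at hvA
        simp only [Finset.mem_insert, Finset.mem_singleton] at hvA
        rcases hvA with rfl | rfl | rfl
        · exact ⟨1, 0, by simp⟩
        · exact ⟨0, 1, by simp⟩
        · exact ⟨1, 1, by simp [hv3]⟩
  · intro v hv0
    by_cases hc : ∃ i, v ∈ perp (S i)
    · exact Or.inl hc
    · push_neg at hc
      right
      have hvA : v ∈ A := (hmemA v).2 ⟨hv0, hc⟩
      rw [hAeq] at hvA
      simp only [Finset.mem_insert, Finset.mem_singleton] at hvA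
      rw [Submodule.mem_span_pair]
      rcases hvA with rfl | rfl | rfl
      · exact ⟨1, 0, by simp⟩
      · exact ⟨0, 1, by simp⟩
      · exact ⟨1, 1, by simp [hv3]⟩
  · intro i
    ext v
    simp only [Submodule.mem_inf, Submodule.mem_bot]
    constructor
    · rintro ⟨hvp, hvT⟩
      rw [Submodule.mem_span_pair] at hvT
      obtain ⟨c, d, rfl⟩ := hvT
      have hv3p := (hmemA v3).1 hv3A
      rcases zmod2_cases c with rfl | rfl <;> rcases zmod2_cases d with rfl | rfl <;>
        simp only [zero_smul, one_smul, add_zero, zero_add] at hvp ⊢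
      · exact absurd hvp (hv2.2 i)
      · exact absurd hvp (hv1.2 i)
      · exact absurd hvp (hv3 ▸ hv3p.2 i)
    · rintro rfl
      exact ⟨(perp _).zero_mem, Submodule.zero_mem _⟩
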